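/- Let G be a multigraph, H = (L,H,M) a full m-fold cover of G, and e an edge with endpoints u,v such that for every other edge f between u and v, no edge of M(f) has the same pair of endpoints as any edge of M(e). Then P_DP(G,H) = P_DP(G-e, H-e) - P_DP(G·e, H·e). -/

import Mathlib

/-- A finite-multiplicity loopless multigraph on vertex set `V`:
`mult u v` is the number of parallel edges joining `u` and `v`. -/
structure Multigraph (V : Type) where
  mult : V → V → ℕ
  symm : ∀ u v, mult u v = mult v u
  loopless : ∀ v, mult v v = 0

/-- A full `m`-fold cover of a multigraph `G`.  The list of a vertex `u` is
identified with `{u} × Fin m`; for each ordered pair `(u,v)` and each edge index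
`i` (only indices `i < G.mult u v` are relevant) the corresponding perfect
matching between the two lists is recorded as a permutation of `Fin m`, the two
orientations of an edge giving inverse permutations. -/
structure FullCover {V : Type} (G : Multigraph V) (m : ℕ) where
  perm : V → V → ℕ → (Fin m ≃ Fin m)
  compat : ∀ u v i, perm v u i = (perm u v i).symm

/-- `f` (choosing one list element per vertex) is an `H`-coloring: it avoids all
cross edges of the cover. -/
def FullCover.IsColoring {V : Type} {G : Multigraph V} {m : ℕ}
    (c : FullCover G m) (f : V → Fin m) : Prop :=
  ∀ u v i, i < G.mult u v → (c.perm u v i) (f u) ≠ f v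

/-- The number of `H`-colorings of `G` for the cover `c`. -/
noncomputable def FullCover.numColorings {V : Type} {G : Multigraph V} {m : ℕ}
    (c : FullCover G m) : ℕ :=
  Nat.card {f : V → Fin m // c.IsColoring f}

/-- The DP color function: the minimum number of colorings over all full
`m`-fold covers. -/
noncomputable def Multigraph.PDP {V : Type} (G : Multigraph V) (m : ℕ) : ℕ :=
  sInf {n | ∃ c : FullCover G m, n = c.numColorings}

/-- The dual DP color function: the maximum number of colorings over all full
`m`-fold covers. -/
noncomputable def Multigraph.PDPdual {V : Type} (G : Multigraph V) (m : ℕ) : ℕ :=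
  sSup {n | ∃ c : FullCover G m, n = c.numColorings}

/-- The number of proper `m`-colorings of (the underlying graph of) `G`. -/
noncomputable def Multigraph.properCount {V : Type} (G : Multigraph V) (m : ℕ) : ℕ :=
  Nat.card {f : V → Fin m // ∀ u v, 0 < G.mult u v → f u ≠ f v}
/-- The multigraph obtained from `G` by deleting one of the edges joining
`u` and `v`. -/
def Multigraph.deleteEdge {V : Type} [DecidableEq V] (G : Multigraph V) (u v : V) :
    Multigraph V where
  mult x y := if (x = u ∧ y = v) ∨ (x = v ∧ y = u) then G.mult x y - 1 else G.mult x y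
  symm := by
    intro x y
    try dsimp only
    by_cases h : (x = u ∧ y = v) ∨ (x = v ∧ y = u)
    · rw [if_pos h, if_pos (by tauto), G.symm]
    · rw [if_neg h, if_neg (by tauto), G.symm]
  loopless := by
    intro x
    try dsimp only
    by_cases h : (x = u ∧ x = v) ∨ (x = v ∧ x = u)
    · rw [if_pos h, G.loopless]
    · rw [if_neg h, G.loopless]

/-- The multigraph obtained from `G` by contracting an edge joining `u` and `v`:
the vertex `v` is removed, the merged vertex is `u`, loops created at the merged
vertex are deleted, and all other parallel edges are retained. -/
def Multigraph.contractEdge {V : Type} [DecidableEq V] (G : Multigraph V) (u v : V) :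
    Multigraph {x : V // x ≠ v} where
  mult x y :=
    if x.1 = u ∧ y.1 = u then 0
    else if x.1 = u then G.mult u y.1 + G.mult v y.1
    else if y.1 = u then G.mult x.1 u + G.mult x.1 v
    else G.mult x.1 y.1
  symm := by
    intro x y
    try dsimp only
    by_cases h1 : x.1 = u <;> by_cases h2 : y.1 = u <;>
      simp only [h1, h2, and_true, and_false, true_and, false_and, if_true, if_false,
        ite_true, ite_false, if_pos, if_neg, not_false_iff] <;>
      first
        | rfl
        | (rw [G.symm u, G.symm v])
        | rw [G.symm]
  loopless := by
    intro x
    try dsimp only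
    by_cases h : x.1 = u
    · rw [if_pos ⟨h, h⟩]
    · rw [if_neg (by tauto), if_neg h, if_neg h, G.loopless]

/-- The cover of `G - e` induced by a cover of `G`, where `e` is the `i`-th edge
joining `u` and `v`: the matching of `e` is deleted and the remaining matchings
between the lists of `u` and `v` are reindexed. -/
def FullCover.deleteEdge {V : Type} [DecidableEq V] {G : Multigraph V} {m : ℕ}
    (c : FullCover G m) (u v : V) (i : ℕ) : FullCover (G.deleteEdge u v) m where
  perm x y j :=
    if (x = u ∧ y = v) ∨ (x = v ∧ y = u) then
      c.perm x y (if j < i then j else j + 1)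
    else c.perm x y j
  compat := by
    intro x y j
    try dsimp only
    by_cases h : (x = u ∧ y = v) ∨ (x = v ∧ y = u)
    · rw [if_pos (by tauto), if_pos h, c.compat]
    · rw [if_neg (by tauto), if_neg h, c.compat]

/-- The cover of `G · e` induced by a cover of `G`, where `e` is the `i`-th edge
joining `u` and `v`: the lists of `u` and `v` are merged along the matching of
`e` (with the merged vertex labelled `u`), and all other matchings are carried
over accordingly. -/
def FullCover.contractEdge {V : Type} [DecidableEq V] {G : Multigraph V} {m : ℕ}
    (c : FullCover G m) (u v : V) (i : ℕ) : FullCover (G.contractEdge u v) m where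
  perm x y j :=
    if x.1 = u ∧ y.1 = u then Equiv.refl _
    else if x.1 = u then
      (if j < G.mult u y.1 then c.perm u y.1 j
       else (c.perm u v i).trans (c.perm v y.1 (j - G.mult u y.1)))
    else if y.1 = u then
      (if j < G.mult x.1 u then c.perm x.1 u j
       else (c.perm x.1 v (j - G.mult x.1 u)).trans (c.perm u v i).symm)
    else c.perm x.1 y.1 j
  compat := by
    intro x y j
    try dsimp only
    by_cases h1 : x.1 = u <;> by_cases h2 : y.1 = u <;>
      simp only [h1, h2, and_true, and_false, true_and, false_and, if_true, if_false,
        ite_true, ite_false, not_false_iff]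
    · rfl
    · rw [G.symm y.1 u]
      by_cases hj : j < G.mult u y.1
      · rw [if_pos hj, if_pos hj, c.compat]
      · rw [if_neg hj, if_neg hj, c.compat]
        rfl
    · rw [G.symm x.1 u]
      by_cases hj : j < G.mult u x.1
      · rw [if_pos hj, if_pos hj, c.compat]
      · rw [if_neg hj, if_neg hj, c.compat x.1 v (j - G.mult u x.1)]
        rfl
    · rw [c.compat]

section Aux

variable {V : Type} [DecidableEq V] {G : Multigraph V} {m : ℕ}
  (c : FullCover G m) (u v : V) (i : ℕ)

lemma deleteEdge_mult' (a b : V) :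
    (G.deleteEdge u v).mult a b =
      if (a = u ∧ b = v) ∨ (a = v ∧ b = u) then G.mult a b - 1 else G.mult a b := rfl

lemma deleteEdge_perm' (a b : V) (j : ℕ) :
    (c.deleteEdge u v i).perm a b j =
      if (a = u ∧ b = v) ∨ (a = v ∧ b = u) then
        c.perm a b (if j < i then j else j + 1)
      else c.perm a b j := rfl

lemma contractEdge_mult' (a b : {x : V // x ≠ v}) :
    (G.contractEdge u v).mult a b =
      if a.1 = u ∧ b.1 = u then 0
      else if a.1 = u then G.mult u b.1 + G.mult v b.1
      else if b.1 = u then G.mult a.1 u + G.mult a.1 v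
      else G.mult a.1 b.1 := rfl

lemma contractEdge_perm' (a b : {x : V // x ≠ v}) (j : ℕ) :
    (c.contractEdge u v i).perm a b j =
      if a.1 = u ∧ b.1 = u then Equiv.refl _
      else if a.1 = u then
        (if j < G.mult u b.1 then c.perm u b.1 j
         else (c.perm u v i).trans (c.perm v b.1 (j - G.mult u b.1)))
      else if b.1 = u then
        (if j < G.mult a.1 u then c.perm a.1 u j
         else (c.perm a.1 v (j - G.mult a.1 u)).trans (c.perm u v i).symm)
      else c.perm a.1 b.1 j := rfl

lemma aux_isColoring_iff (hi : i < G.mult u v) (f : V → Fin m) :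
    c.IsColoring f ↔
      (c.deleteEdge u v i).IsColoring f ∧ c.perm u v i (f u) ≠ f v := by
  constructor
  · intro hc
    refine ⟨?_, hc u v i hi⟩
    intro x y j hj
    simp only [Multigraph.deleteEdge] at hj
    simp only [FullCover.deleteEdge]
    by_cases h : (x = u ∧ y = v) ∨ (x = v ∧ y = u)
    · rw [if_pos h]
      rw [if_pos h] at hj
      split_ifs with hji
      · exact hc x y j (by omega)
      · exact hc x y (j + 1) (by omega)
    · rw [if_neg h]
      rw [if_neg h] at hj
      exact hc x y j hj
  · rintro ⟨hd, he⟩ x y j hj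
    by_cases h : (x = u ∧ y = v) ∨ (x = v ∧ y = u)
    · have hmx : G.mult x y = G.mult u v := by
        rcases h with ⟨rfl, rfl⟩ | ⟨rfl, rfl⟩
        · rfl
        · exact G.symm _ _
      rcases eq_or_ne j i with rfl | hji
      · rcases h with ⟨rfl, rfl⟩ | ⟨rfl, rfl⟩
        · exact he
        · rw [c.compat]
          intro hcon
          exact he ((Equiv.symm_apply_eq _).mp hcon).symm
      · by_cases hji2 : j < i
        · have hd' := hd x y j (by simp [Multigraph.deleteEdge, if_pos h]; omega)
          simpa [FullCover.deleteEdge, if_pos h, hji2] using hd'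
        · have hji3 : i < j := by omega
          have hd' := hd x y (j - 1)
            (by simp [Multigraph.deleteEdge, if_pos h]; omega)
          have hlt : ¬ (j - 1 < i) := by omega
          have hj1 : j - 1 + 1 = j := by omega
          simpa [FullCover.deleteEdge, if_pos h, hlt, hj1] using hd'
    · have hd' := hd x y j (by simp [Multigraph.deleteEdge, if_neg h]; exact hj)
      rwa [deleteEdge_perm', if_neg h] at hd'

lemma aux_contract_coloring (hne : u ≠ v) (f : V → Fin m)
    (hf : (c.deleteEdge u v i).IsColoring f)
    (hfv : f v = c.perm u v i (f u)) :
    (c.contractEdge u v i).IsColoring (fun x => f x.1) := by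
  rintro ⟨x, hxv⟩ ⟨y, hyv⟩ j hj
  rw [contractEdge_mult'] at hj
  rw [contractEdge_perm']
  dsimp only at hj ⊢
  by_cases h1 : x = u <;> by_cases h2 : y = u
  · rw [if_pos ⟨h1, h2⟩] at hj; omega
  · subst h1
    rw [if_neg (by tauto), if_pos rfl] at hj ⊢
    by_cases hlt : j < G.mult x y
    · rw [if_pos hlt]
      have := hf x y j (by rw [deleteEdge_mult', if_neg (by tauto)]; exact hlt)
      rwa [deleteEdge_perm', if_neg (by tauto)] at this
    · rw [if_neg hlt]
      have hk : j - G.mult x y < G.mult v y := by omega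
      have := hf v y (j - G.mult x y)
        (by rw [deleteEdge_mult', if_neg (by tauto)]; exact hk)
      rw [deleteEdge_perm', if_neg (by tauto)] at this
      rw [hfv] at this
      exact this
  · subst h2
    rw [if_neg (by tauto), if_neg h1, if_pos rfl] at hj ⊢
    by_cases hlt : j < G.mult x y
    · rw [if_pos hlt]
      have := hf x y j (by rw [deleteEdge_mult', if_neg (by tauto)]; exact hlt)
      rwa [deleteEdge_perm', if_neg (by tauto)] at this
    · rw [if_neg hlt]
      have hk : j - G.mult x y < G.mult x v := by omega
      have := hf x v (j - G.mult x y)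
        (by rw [deleteEdge_mult', if_neg (by tauto)]; exact hk)
      rw [deleteEdge_perm', if_neg (by tauto)] at this
      simp only [Equiv.trans_apply, ne_eq, Equiv.symm_apply_eq]
      rw [← hfv]
      exact this
  · rw [if_neg (by tauto), if_neg h1, if_neg h2] at hj ⊢
    have := hf x y j (by rw [deleteEdge_mult', if_neg (by tauto)]; exact hj)
    rwa [deleteEdge_perm', if_neg (by tauto)] at this

lemma aux_delete_coloring (hi : i < G.mult u v)
    (hdisj : ∀ j, j < G.mult u v → j ≠ i → ∀ a : Fin m,
      c.perm u v j a ≠ c.perm u v i a)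
    (hne : u ≠ v) (g : {x : V // x ≠ v} → Fin m)
    (hg : (c.contractEdge u v i).IsColoring g) :
    (c.deleteEdge u v i).IsColoring
      (fun x => if h : x = v then c.perm u v i (g ⟨u, hne⟩) else g ⟨x, h⟩) := by
  intro x y j hj
  rw [deleteEdge_mult'] at hj
  rw [deleteEdge_perm']
  by_cases h : (x = u ∧ y = v) ∨ (x = v ∧ y = u)
  · rw [if_pos h] at hj ⊢
    have hmx : G.mult x y = G.mult u v := by
      rcases h with ⟨rfl, rfl⟩ | ⟨rfl, rfl⟩
      · rfl
      · exact G.symm _ _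
    set j' := if j < i then j else j + 1 with hj'
    have hj'lt : j' < G.mult u v := by simp only [hj']; split <;> omega
    have hj'ne : j' ≠ i := by simp only [hj']; split <;> omega
    rcases h with ⟨hx, hy⟩ | ⟨hx, hy⟩
    · rw [hx, hy]
      simp only [dif_neg hne, dif_pos rfl]
      exact hdisj j' hj'lt hj'ne _
    · rw [hx, hy]
      simp only [dif_neg hne, dif_pos rfl]
      rw [c.compat]
      intro hcon
      have : c.perm u v i (g ⟨u, hne⟩) = c.perm u v j' (g ⟨u, hne⟩) :=
        (Equiv.symm_apply_eq _).mp hcon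
      exact hdisj j' hj'lt hj'ne _ this.symm
  · rw [if_neg h] at hj ⊢
    have hxy : x ≠ y := by
      rintro rfl; rw [G.loopless] at hj; omega
    by_cases hxv : x = v
    · subst hxv
      have hyu : y ≠ u := by tauto
      have hyx : y ≠ x := hxy.symm
      have hmx : G.mult x y = G.mult y x := G.symm _ _
      have := hg ⟨u, hne⟩ ⟨y, hyx⟩ (G.mult u y + j) (by
        rw [contractEdge_mult']
        dsimp only
        rw [if_neg (by tauto), if_pos rfl]
        omega)
      rw [contractEdge_perm'] at this
      dsimp only at this
      rw [if_neg (by tauto), if_pos rfl, if_neg (by omega)] at this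
      simp only [Nat.add_sub_cancel_left, Equiv.trans_apply] at this
      simp only [dif_pos rfl, dif_neg hyx]
      exact this
    · by_cases hyv : y = v
      · subst hyv
        have hxu : x ≠ u := by tauto
        have := hg ⟨x, hxv⟩ ⟨u, hne⟩ (G.mult x u + j) (by
          rw [contractEdge_mult']
          dsimp only
          rw [if_neg (by tauto), if_neg hxu, if_pos rfl]
          omega)
        rw [contractEdge_perm'] at this
        dsimp only at this
        rw [if_neg (by tauto), if_neg hxu, if_pos rfl, if_neg (by omega)] at this
        simp only [Nat.add_sub_cancel_left, Equiv.trans_apply, ne_eq,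
          Equiv.symm_apply_eq] at this
        simp only [dif_neg hxv, dif_pos rfl]
        exact this
      · simp only [dif_neg hxv, dif_neg hyv]
        by_cases hxu : x = u
        · subst hxu
          have hyx : y ≠ x := hxy.symm
          have := hg ⟨x, hxv⟩ ⟨y, hyv⟩ j (by
            rw [contractEdge_mult']
            dsimp only
            rw [if_neg (by tauto), if_pos rfl]
            omega)
          rw [contractEdge_perm'] at this
          dsimp only at this
          rwa [if_neg (by tauto), if_pos rfl, if_pos hj] at this
        · by_cases hyu : y = u
          · subst hyu
            have := hg ⟨x, hxv⟩ ⟨y, hyv⟩ j (by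
              rw [contractEdge_mult']
              dsimp only
              rw [if_neg (by tauto), if_neg hxu, if_pos rfl]
              omega)
            rw [contractEdge_perm'] at this
            dsimp only at this
            rwa [if_neg (by tauto), if_neg hxu, if_pos rfl, if_pos hj] at this
          · have := hg ⟨x, hxv⟩ ⟨y, hyv⟩ j (by
              rw [contractEdge_mult']
              dsimp only
              rw [if_neg (by tauto), if_neg hxu, if_neg hyu]
              exact hj)
            rw [contractEdge_perm'] at this
            dsimp only at this
            rwa [if_neg (by tauto), if_neg hxu, if_neg hyu] at this

end Aux

/-- Cover-level deletion-contraction equality: if `c` is a full `m`-fold cover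
of `G`, `e` is the `i`-th edge joining `u` and `v`, and no other matching
between the lists of `u` and `v` shares an edge (as a pair of endpoints) with
the matching of `e`, then `P_DP(G,c) = P_DP(G-e, c-e) - P_DP(G·e, c·e)`. -/
theorem numColorings_deletion_contraction_eq {V : Type} [Fintype V] [DecidableEq V]
    (G : Multigraph V) (m : ℕ) (c : FullCover G m)
    (u v : V) (i : ℕ) (hi : i < G.mult u v)
    (hdisj : ∀ j, j < G.mult u v → j ≠ i → ∀ a : Fin m,
      c.perm u v j a ≠ c.perm u v i a) :
    (c.numColorings : ℤ) =
      ((c.deleteEdge u v i).numColorings : ℤ) - (c.contractEdge u v i).numColorings := by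
  classical
  have hne : u ≠ v := by
    rintro rfl
    rw [G.loopless] at hi
    omega
  have key : (c.deleteEdge u v i).numColorings =
      c.numColorings + (c.contractEdge u v i).numColorings := by
    unfold FullCover.numColorings
    rw [← Nat.card_sum]
    refine Nat.card_congr ?_
    refine
      { toFun := fun f =>
          if h : c.perm u v i (f.1 u) ≠ f.1 v then
            Sum.inl ⟨f.1, (aux_isColoring_iff c u v i hi f.1).mpr ⟨f.2, h⟩⟩
          else
            Sum.inr ⟨fun x => f.1 x.1,
              aux_contract_coloring c u v i hne f.1 f.2
                (by push_neg at h; exact h.symm)⟩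
        invFun := Sum.elim
          (fun f => ⟨f.1, ((aux_isColoring_iff c u v i hi f.1).mp f.2).1⟩)
          (fun g => ⟨fun x => if h : x = v then c.perm u v i (g.1 ⟨u, hne⟩)
              else g.1 ⟨x, h⟩,
            aux_delete_coloring c u v i hi hdisj hne g.1 g.2⟩)
        left_inv := ?_
        right_inv := ?_ }
    · rintro ⟨f, hf⟩
      by_cases h : c.perm u v i (f u) ≠ f v
      · simp only [dif_pos h, Sum.elim_inl]
      · simp only [dif_neg h, Sum.elim_inr]
        push_neg at h
        refine Subtype.ext (funext fun x => ?_)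
        dsimp only
        by_cases hx : x = v
        · rw [dif_pos hx, hx]
          exact h
        · rw [dif_neg hx]
    · rintro (⟨f, hf⟩ | ⟨g, hg⟩)
      · simp only [Sum.elim_inl]
        exact dif_pos ((aux_isColoring_iff c u v i hi f).mp hf).2
      · dsimp only [Sum.elim_inr]
        have h1 : ¬ (c.perm u v i
            (if h : u = v then c.perm u v i (g ⟨u, hne⟩) else g ⟨u, h⟩) ≠
            (if h : v = v then c.perm u v i (g ⟨u, hne⟩) else g ⟨v, h⟩)) := by
          push_neg
          rw [dif_neg hne, dif_pos rfl]
        rw [dif_neg h1]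
        exact congrArg Sum.inr (Subtype.ext (funext fun x => dif_neg x.2))
  rw [key]
  push_cast
  ring
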